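/- For every g : {0,1}^d → {0,1}, the function f is 4-Lipschitz on [0,1]^d (with respect to the Euclidean metric), takes values in [0,1], and satisfies f(x) = g(z) for every z ∈ {0,1}^d and every x ∈ A_z; in particular f agrees with g on {0,1}^d. -/

import Mathlib

noncomputable section

/-- Boolean bit as a real number. -/
def bR (b : Bool) : ℝ := if b then 1 else 0

/-- The unit cube `[0,1]^d` inside Euclidean space. -/
def cube (d : ℕ) : Set (EuclideanSpace ℝ (Fin d)) := {x | ∀ i, x i ∈ Set.Icc (0:ℝ) 1}

/-- `A_z = {x ∈ [0,1]^d : |x_i − z_i| ≤ 1/4 for all i}`. -/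
def Az {d : ℕ} (z : Fin d → Bool) : Set (EuclideanSpace ℝ (Fin d)) :=
  {x | ∀ i, x i ∈ Set.Icc (0:ℝ) 1 ∧ |x i - bR (z i)| ≤ 1/4}

/-- Given `g : {0,1}^d → {0,1}`, the associated real function
`f(x) = Σ_{z∈{0,1}^d} g(z)·max(0, 1 − 4·dist(x, A_z))` (Euclidean distance to `A_z`). -/
def fg {d : ℕ} (g : (Fin d → Bool) → Bool) (x : EuclideanSpace ℝ (Fin d)) : ℝ :=
  ∑ z : Fin d → Bool, bR (g z) * max 0 (1 - 4 * Metric.infDist x (Az z))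

/-- A vector of `ℝ^d` viewed as a point of Euclidean space. -/
def toEuc {d : ℕ} (x : Fin d → ℝ) : EuclideanSpace ℝ (Fin d) := WithLp.toLp 2 x

lemma bR_nonneg (b : Bool) : 0 ≤ bR b := by unfold bR; split <;> norm_num

lemma bR_le_one (b : Bool) : bR b ≤ 1 := by unfold bR; split <;> norm_num

lemma le_infDist' {α : Type*} [MetricSpace α] {s : Set α} {x : α} {c : ℝ}
    (hs : s.Nonempty) (h : ∀ y ∈ s, c ≤ dist x y) : c ≤ Metric.infDist x s := by
  by_contra hc
  push_neg at hc
  obtain ⟨y, hy, hlt⟩ := (Metric.infDist_lt_iff hs).1 hc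
  exact absurd hlt (not_lt.2 (h y hy))

lemma coord_le_dist {d : ℕ} (x y : EuclideanSpace ℝ (Fin d)) (i : Fin d) :
    |x i - y i| ≤ dist x y := by
  rw [EuclideanSpace.dist_eq, ← Real.sqrt_sq_eq_abs]
  apply Real.sqrt_le_sqrt
  calc (x i - y i)^2 = dist (x i) (y i) ^ 2 := by rw [Real.dist_eq, sq_abs]
  _ ≤ ∑ j, dist (x j) (y j) ^ 2 :=
      Finset.single_le_sum (f := fun j => dist (x j) (y j) ^ 2)
        (fun j _ => sq_nonneg _) (Finset.mem_univ i)

lemma corner_mem_Az {d : ℕ} (z : Fin d → Bool) :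
    toEuc (fun i => bR (z i)) ∈ Az z := by
  intro i
  refine ⟨?_, by simp [toEuc]⟩
  show bR (z i) ∈ Set.Icc (0:ℝ) 1
  unfold bR; cases z i <;> norm_num

lemma Az_nonempty {d : ℕ} (z : Fin d → Bool) : (Az z).Nonempty :=
  ⟨_, corner_mem_Az z⟩

lemma infDist_coord_lb {d : ℕ} (w : Fin d → Bool) (x : EuclideanSpace ℝ (Fin d)) (i : Fin d) :
    (if w i then (3/4 - x i) else (x i - 1/4)) ≤ Metric.infDist x (Az w) := by
  apply le_infDist' (Az_nonempty w)
  intro y hy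
  have h3 := abs_le.1 (hy i).2
  have h2a : x i - y i ≤ dist x y := le_trans (le_abs_self _) (coord_le_dist x y i)
  have h2b : y i - x i ≤ dist x y := by
    have := coord_le_dist x y i
    rw [abs_sub_comm] at this
    exact le_trans (le_abs_self _) this
  cases hw : w i <;> rw [hw] at h3 <;> simp only [bR] at h3 ⊢ <;> norm_num at h3 ⊢ <;> linarith

lemma half_le_sum_infDist {d : ℕ} (z z' : Fin d → Bool) (hne : z ≠ z')
    (x : EuclideanSpace ℝ (Fin d)) :
    1/2 ≤ Metric.infDist x (Az z) + Metric.infDist x (Az z') := by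
  obtain ⟨i, hi⟩ : ∃ i, z i ≠ z' i := by
    by_contra h; push_neg at h; exact hne (funext h)
  have h1 := infDist_coord_lb z x i
  have h2 := infDist_coord_lb z' x i
  cases hz : z i <;> cases hz' : z' i <;> rw [hz] at h1 hi <;> rw [hz'] at h2 hi <;>
    first | (exact absurd rfl hi) | (norm_num at h1 h2 ⊢; linarith)

/-- If some bump is positive at `x`, then all other terms vanish and `fg` reduces to one term. -/
lemma fg_eq_single {d : ℕ} (g : (Fin d → Bool) → Bool) (x : EuclideanSpace ℝ (Fin d))
    (z0 : Fin d → Bool) (h : Metric.infDist x (Az z0) < 1/4) :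
    fg g x = bR (g z0) * max 0 (1 - 4 * Metric.infDist x (Az z0)) := by
  unfold fg
  apply Finset.sum_eq_single_of_mem z0 (Finset.mem_univ z0)
  intro z _ hz
  have hs := half_le_sum_infDist z z0 hz x
  have hmax : max 0 (1 - 4 * Metric.infDist x (Az z)) = 0 := max_eq_left (by linarith)
  rw [hmax, mul_zero]

lemma fg_nonneg {d : ℕ} (g : (Fin d → Bool) → Bool) (x : EuclideanSpace ℝ (Fin d)) :
    0 ≤ fg g x :=
  Finset.sum_nonneg fun z _ => mul_nonneg (bR_nonneg _) (le_max_left _ _)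

lemma fg_le_one {d : ℕ} (g : (Fin d → Bool) → Bool) (x : EuclideanSpace ℝ (Fin d)) :
    fg g x ≤ 1 := by
  by_cases h : ∃ z0, Metric.infDist x (Az z0) < 1/4
  · obtain ⟨z0, hz0⟩ := h
    rw [fg_eq_single g x z0 hz0]
    have h1 : max 0 (1 - 4 * Metric.infDist x (Az z0)) ≤ 1 := by
      apply max_le (by norm_num)
      have := Metric.infDist_nonneg (x := x) (s := Az z0)
      linarith
    calc bR (g z0) * max 0 (1 - 4 * Metric.infDist x (Az z0)) ≤ 1 * 1 :=
          mul_le_mul (bR_le_one _) h1 (le_max_left _ _) zero_le_one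
    _ = 1 := one_mul 1
  · push_neg at h
    have : fg g x = 0 := by
      unfold fg
      apply Finset.sum_eq_zero
      intro z _
      have hmax : max 0 (1 - 4 * Metric.infDist x (Az z)) = 0 := max_eq_left (by linarith [h z])
      rw [hmax, mul_zero]
    rw [this]; norm_num

lemma fg_eq_on_Az {d : ℕ} (g : (Fin d → Bool) → Bool) (z : Fin d → Bool)
    (x : EuclideanSpace ℝ (Fin d)) (hx : x ∈ Az z) : fg g x = bR (g z) := by
  have h0 : Metric.infDist x (Az z) = 0 := Metric.infDist_zero_of_mem hx
  rw [fg_eq_single g x z (by rw [h0]; norm_num), h0]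
  norm_num

lemma bump_sub_le {d : ℕ} (z : Fin d → Bool) (x y : EuclideanSpace ℝ (Fin d)) :
    max 0 (1 - 4 * Metric.infDist x (Az z)) - max 0 (1 - 4 * Metric.infDist y (Az z))
      ≤ 4 * dist x y := by
  have h1 : Metric.infDist y (Az z) ≤ Metric.infDist x (Az z) + dist x y := by
    rw [dist_comm]; exact Metric.infDist_le_infDist_add_dist
  have h0 : (0:ℝ) ≤ dist x y := dist_nonneg
  rcases max_cases 0 (1 - 4 * Metric.infDist x (Az z)) with ⟨hx, hx'⟩ | ⟨hx, hx'⟩ <;>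
    rcases max_cases 0 (1 - 4 * Metric.infDist y (Az z)) with ⟨hy, hy'⟩ | ⟨hy, hy'⟩ <;>
    rw [hx, hy] <;> linarith

lemma fg_sub_le {d : ℕ} (g : (Fin d → Bool) → Bool) (x y : EuclideanSpace ℝ (Fin d)) :
    fg g x - fg g y ≤ 4 * dist x y := by
  have h0 : (0:ℝ) ≤ dist x y := dist_nonneg
  by_cases h : ∃ z0, Metric.infDist x (Az z0) < 1/4
  · obtain ⟨z0, hz0⟩ := h
    rw [fg_eq_single g x z0 hz0]
    have hy : bR (g z0) * max 0 (1 - 4 * Metric.infDist y (Az z0)) ≤ fg g y :=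
      Finset.single_le_sum
        (f := fun z => bR (g z) * max 0 (1 - 4 * Metric.infDist y (Az z)))
        (fun z _ => mul_nonneg (bR_nonneg _) (le_max_left _ _)) (Finset.mem_univ z0)
    have hb := bump_sub_le z0 x y
    have hkey : bR (g z0) * max 0 (1 - 4 * Metric.infDist x (Az z0))
        - bR (g z0) * max 0 (1 - 4 * Metric.infDist y (Az z0)) ≤ 4 * dist x y := by
      rw [← mul_sub]
      rcases le_or_gt (max 0 (1 - 4 * Metric.infDist x (Az z0))
          - max 0 (1 - 4 * Metric.infDist y (Az z0))) 0 with hle | hlt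
      · exact le_trans (mul_nonpos_of_nonneg_of_nonpos (bR_nonneg _) hle) (by linarith)
      · calc bR (g z0) * _ ≤ 1 * (max 0 (1 - 4 * Metric.infDist x (Az z0))
              - max 0 (1 - 4 * Metric.infDist y (Az z0))) :=
            mul_le_mul_of_nonneg_right (bR_le_one _) (le_of_lt hlt)
        _ ≤ 4 * dist x y := by rw [one_mul]; exact hb
    linarith
  · push_neg at h
    have hx0 : fg g x = 0 := by
      unfold fg
      apply Finset.sum_eq_zero
      intro z _
      have : max 0 (1 - 4 * Metric.infDist x (Az z)) = 0 := max_eq_left (by linarith [h z])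
      rw [this, mul_zero]
    have := fg_nonneg g y
    linarith

/-- for every `g : {0,1}^d → {0,1}`, the function `f` is `4`-Lipschitz on
`[0,1]^d` (w.r.t. the Euclidean metric), takes values in `[0,1]`, and satisfies
`f(x) = g(z)` for every `z ∈ {0,1}^d` and every `x ∈ A_z`; in particular `f` agrees
with `g` on `{0,1}^d`. -/
theorem fg_lipschitz_range_and_agrees (d : ℕ) (g : (Fin d → Bool) → Bool) :
    LipschitzOnWith 4 (fg g) (cube d) ∧
    (∀ x ∈ cube d, fg g x ∈ Set.Icc (0:ℝ) 1) ∧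
    (∀ z : Fin d → Bool, ∀ x ∈ Az z, fg g x = bR (g z)) ∧
    (∀ z : Fin d → Bool, fg g (toEuc (fun i => bR (z i))) = bR (g z)) := by
  refine ⟨?_, fun x _ => ⟨fg_nonneg g x, fg_le_one g x⟩,
    fun z x hx => fg_eq_on_Az g z x hx,
    fun z => fg_eq_on_Az g z _ (corner_mem_Az z)⟩
  apply LipschitzOnWith.of_dist_le_mul
  intro x _ y _
  rw [Real.dist_eq]
  have h1 := fg_sub_le g x y
  have h2 := fg_sub_le g y x
  rw [dist_comm y x] at h2
  have hc : ((4:NNReal) : ℝ) = 4 := by norm_num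
  rw [hc, abs_sub_le_iff]
  exact ⟨h1, h2⟩

end
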